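/- Let G be a group, H a subgroup of G, and A a nonempty finite subset of G. Then for any k ≥ 1, |A^{k+1}| ≥ (|A^k ∩ H| / |A·A⁻¹ ∩ H|) · |A|. -/

import Mathlib

open Pointwise

theorem stmt_5 {G : Type*} [Group G] [DecidableEq G] (H : Subgroup G)
    [DecidablePred (· ∈ H)] (A : Finset G) (hA : A.Nonempty) (k : ℕ) (hk : 1 ≤ k) :
    (((A ^ k).filter (· ∈ H)).card : ℝ) / ((((A * A⁻¹).filter (· ∈ H)).card : ℝ)) * (A.card : ℝ)
      ≤ ((A ^ (k + 1)).card : ℝ) := by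
  have hone : (1 : G) ∈ (A * A⁻¹).filter (· ∈ H) := by
    obtain ⟨a, ha⟩ := hA
    have : a * a⁻¹ ∈ A * A⁻¹ := Finset.mul_mem_mul ha (Finset.inv_mem_inv ha)
    simp only [Finset.mem_filter]
    exact ⟨by simpa using this, H.one_mem⟩
  have key : ((A ^ k).filter (· ∈ H)).card * A.card ≤
      (((A * A⁻¹).filter (· ∈ H)).card) * (A ^ (k + 1)).card := by
    rw [← Finset.card_product]
    apply Finset.card_le_mul_card_image_of_maps_to
      (f := fun p : G × G => p.1 * p.2)
    · rintro ⟨b, a⟩ hba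
      simp only [Finset.mem_product, Finset.mem_filter] at hba
      rw [pow_succ]
      exact Finset.mul_mem_mul hba.1.1 hba.2
    · intro x hx
      rcases ((((A ^ k).filter (· ∈ H)) ×ˢ A).filter
          (fun p => p.1 * p.2 = x)).eq_empty_or_nonempty with h | h
      · simp [h]
      · obtain ⟨⟨b₀, a₀⟩, h₀⟩ := h
        simp only [Finset.mem_filter, Finset.mem_product] at h₀
        apply Finset.card_le_card_of_injOn (fun p => b₀⁻¹ * p.1)
        · rintro ⟨b, a⟩ hba
          simp only [Finset.mem_coe, Finset.mem_filter, Finset.mem_product] at hba ⊢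
          constructor
          · have heq : b₀⁻¹ * b = a₀ * a⁻¹ := by
              have h1 : b₀ * a₀ = b * a := h₀.2.trans hba.2.symm
              have hb : b = b₀ * a₀ * a⁻¹ := by rw [h1]; group
              rw [hb]; group
            rw [heq]
            exact Finset.mul_mem_mul h₀.1.2 (Finset.inv_mem_inv hba.1.2)
          · exact H.mul_mem (H.inv_mem h₀.1.1.2) hba.1.1.2
        · rintro ⟨b, a⟩ hba ⟨b', a'⟩ hba' hbb
          simp only [Finset.mem_coe, Finset.mem_filter, Finset.mem_product] at hba hba'
          have hb : b = b' := by
            have := mul_left_cancel hbb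
            exact this
          have ha' : a = a' := by
            subst hb
            exact mul_left_cancel (hba.2.trans hba'.2.symm)
          simp [hb, ha']
  have hSpos : (0 : ℝ) < (((A * A⁻¹).filter (· ∈ H)).card : ℝ) := by
    exact_mod_cast Finset.card_pos.mpr ⟨1, hone⟩
  rw [div_mul_eq_mul_div, div_le_iff₀ hSpos]
  calc (((A ^ k).filter (· ∈ H)).card : ℝ) * A.card
      ≤ (((A * A⁻¹).filter (· ∈ H)).card : ℝ) * (A ^ (k + 1)).card := by exact_mod_cast key
    _ = ((A ^ (k + 1)).card : ℝ) * (((A * A⁻¹).filter (· ∈ H)).card : ℝ) := mul_comm _ _
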